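/- Let R be a subring of a commutative ring T with a common ideal C containing a T-regular element. If T is faithfully flat as an R-module, then T = R. -/

import Mathlib

open TensorProduct

/-- If `T` is faithfully flat over `R`, then `T = R`. -/
theorem stmt_2 (T : Type*) [CommRing T] (R : Subring T) (C : Ideal T)
    (hCR : (C : Set T) ⊆ (R : Set T))
    (hreg : ∃ c ∈ C, c ∈ nonZeroDivisors T)
    (hff : Module.FaithfullyFlat ↥R T) :
    R = ⊤ := by
  obtain ⟨c, hcC, hcreg⟩ := hreg
  set A := ↥R
  set c' : A := ⟨c, hCR hcC⟩ with hc'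
  -- smul by c' on T is multiplication by c, hence injective
  have hsmul : ∀ t : T, c' • t = c * t := fun t => rfl
  have hfinj : Function.Injective (LinearMap.lsmul A T c') := by
    intro x y h
    simp only [LinearMap.lsmul_apply, hsmul] at h
    have h0 : (x - y) * c = 0 := by
      rw [sub_mul, mul_comm x c, mul_comm y c, h, sub_self]
    exact sub_eq_zero.mp (mem_nonZeroDivisors_iff_right.mp hcreg _ h0)
  -- smul by c' on T ⊗ T equals rTensor of lsmul c', hence injective by flatness
  have heq : (LinearMap.lsmul A (T ⊗[A] T) c') =
      LinearMap.rTensor T (LinearMap.lsmul A T c') := by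
    apply TensorProduct.ext'
    intro x y
    simp [smul_tmul']
  have htinj : Function.Injective (fun z : T ⊗[A] T => c' • z) := by
    have := hff.toFlat.rTensor_preserves_injective_linearMap
      (M := T) (N := T) (P := T) (LinearMap.lsmul A T c') hfinj
    rw [← heq] at this
    exact this
  -- key identity: x ⊗ y = 1 ⊗ (x * y) in T ⊗[A] T
  have key : ∀ x y : T, (x ⊗ₜ[A] y) = (1 : T) ⊗ₜ[A] (x * y) := by
    intro x y
    apply htinj
    show c' • (x ⊗ₜ[A] y) = c' • ((1 : T) ⊗ₜ[A] (x * y))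
    have hcx : c * x ∈ R := hCR (C.mul_mem_right x hcC)
    set r : A := ⟨c * x, hcx⟩ with hr
    calc c' • (x ⊗ₜ[A] y) = (c' • x) ⊗ₜ[A] y := by rw [smul_tmul']
      _ = (r • (1 : T)) ⊗ₜ[A] y := by
          rw [hsmul]; congr 1; show c * x = (c * x) * 1; rw [mul_one]
      _ = (1 : T) ⊗ₜ[A] (r • y) := smul_tmul r 1 y
      _ = (1 : T) ⊗ₜ[A] (c' • (x * y)) := by
          congr 1; show (c * x) * y = c * (x * y); ring
      _ = c' • ((1 : T) ⊗ₜ[A] (x * y)) := by rw [tmul_smul]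
  -- the quotient T / R
  set S : Submodule A T := LinearMap.range (Algebra.linearMap A T) with hS
  have hmemS : ∀ t : T, t ∈ S ↔ t ∈ R := by
    intro t
    constructor
    · rintro ⟨r, rfl⟩; exact r.2
    · intro ht; exact ⟨⟨t, ht⟩, rfl⟩
  -- show (T ⧸ S) ⊗ T is trivial
  haveI : Subsingleton ((T ⧸ S) ⊗[A] T) := by
    refine subsingleton_iff.mpr fun z w => ?_
    have hz : ∀ z : (T ⧸ S) ⊗[A] T, z = 0 := by
      intro z
      induction z using TensorProduct.induction_on with
      | zero => rfl
      | add a b ha hb => rw [ha, hb, add_zero]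
      | tmul n t =>
        induction n using Submodule.Quotient.induction_on with
        | H x =>
          have : (Submodule.Quotient.mk (p := S) x) ⊗ₜ[A] t =
              LinearMap.rTensor T (S.mkQ) (x ⊗ₜ[A] t) := rfl
          rw [this, key x t]
          have h1 : S.mkQ (1 : T) = 0 := by
            rw [Submodule.mkQ_apply, Submodule.Quotient.mk_eq_zero]
            exact (hmemS 1).mpr R.one_mem
          show (S.mkQ 1) ⊗ₜ[A] (x * t) = 0
          rw [h1, zero_tmul]
    rw [hz z, hz w]
  haveI : Subsingleton (T ⧸ S) :=
    Module.FaithfullyFlat.rTensor_reflects_triviality A T (T ⧸ S)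
  have hStop : S = ⊤ := Submodule.unique_quotient_iff_eq_top.mp ⟨uniqueOfSubsingleton 0⟩
  ext t
  simp only [Subring.mem_top, iff_true]
  exact (hmemS t).mp (hStop ▸ Submodule.mem_top)
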